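/- Let f : ℂ → ℂ be differentiable at 0 (over ℝ) with f(0) = 0, and suppose for all z, w ∈ ℂ, ‖z‖ = ‖w‖ implies ‖f(z)‖ = ‖f(w)‖. Suppose moreover there is an integer k with |k| ≥ 2 such that for every r > 0 there is a continuous g : ℝ → ℝ with g(θ+1) = g(θ) + k for all θ, and f(r·exp(2πiθ)) = ‖f(r)‖·exp(2πi·g(θ)) for all θ ∈ ℝ (f has degree k on each circle of radius r centered at 0). Then fderiv ℝ f 0 = 0. -/

import Mathlib

open Real

noncomputable def e2 (x : ℝ) : ℂ := Complex.exp (2 * (π : ℂ) * Complex.I * (x : ℂ))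

lemma e2_add (x y : ℝ) : e2 (x + y) = e2 x * e2 y := by
  rw [e2, e2, e2, ← Complex.exp_add]; congr 1; push_cast; ring

lemma e2_norm (x : ℝ) : ‖e2 x‖ = 1 := by
  have h : 2 * (π : ℂ) * Complex.I * (x : ℂ) = ((2 * π * x : ℝ) : ℂ) * Complex.I := by
    push_cast; ring
  rw [e2, h, Complex.norm_exp_ofReal_mul_I]

lemma e2_int (n : ℤ) : e2 (n : ℝ) = 1 := by
  have h : 2 * (π : ℂ) * Complex.I * ((n : ℝ) : ℂ) = (n : ℂ) * (2 * (π : ℂ) * Complex.I) := by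
    push_cast; ring
  rw [e2, h, Complex.exp_int_mul_two_pi_mul_I]

lemma e2_neg (x : ℝ) : e2 (-x) = (e2 x)⁻¹ := by
  rw [e2, e2, ← Complex.exp_neg]; congr 1; push_cast; ring

lemma e2_half : e2 (1 / 2) = -1 := by
  have h : 2 * (π : ℂ) * Complex.I * (((1 : ℝ) / 2 : ℝ) : ℂ) = (π : ℂ) * Complex.I := by
    push_cast; ring
  rw [e2, h, Complex.exp_pi_mul_I]

lemma e2_int_sub_half (n : ℤ) : e2 ((n : ℝ) - 1 / 2) = -1 := by
  have h : ((n : ℝ) - 1 / 2) = (n : ℝ) + -(1 / 2) := by ring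
  rw [h, e2_add, e2_int, e2_neg, e2_half]; norm_num

lemma ivt_aux (G : ℝ → ℝ) (hG : Continuous G) (d : ℤ) (hd : d ≠ 0)
    (h1 : G 1 = G 0 + d) (hne : ∀ (θ : ℝ) (n : ℤ), G θ ≠ n) : False := by
  rcases hd.lt_or_gt with h | h
  · have hd1 : (d : ℝ) ≤ -1 := by exact_mod_cast (by omega : d ≤ -1)
    have hfl := Int.floor_le (G 0)
    have hfl2 := Int.sub_one_lt_floor (G 0)
    have hmem : ((⌊G 0⌋ : ℤ) : ℝ) ∈ Set.Icc (G 1) (G 0) := ⟨by linarith, hfl⟩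
    obtain ⟨θ, _, hθ⟩ := intermediate_value_Icc' (by norm_num : (0:ℝ) ≤ 1) hG.continuousOn hmem
    exact hne θ _ hθ
  · have hd1 : (1 : ℝ) ≤ (d : ℝ) := by exact_mod_cast (by omega : (1:ℤ) ≤ d)
    have hcl := Int.le_ceil (G 0)
    have hcl2 := Int.ceil_lt_add_one (G 0)
    have hmem : ((⌈G 0⌉ : ℤ) : ℝ) ∈ Set.Icc (G 0) (G 1) := ⟨hcl, by linarith⟩
    obtain ⟨θ, _, hθ⟩ := intermediate_value_Icc (by norm_num : (0:ℝ) ≤ 1) hG.continuousOn hmem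
    exact hne θ _ hθ

lemma main_aux (k : ℤ) (hk : 2 ≤ |k|) (g : ℝ → ℝ) (hgc : Continuous g)
    (hgp : ∀ θ, g (θ + 1) = g θ + k) (s α : ℝ) (hs : s = 1 ∨ s = -1)
    (hne : ∀ θ : ℝ, e2 (g θ - (s * θ + α)) ≠ -1) : False := by
  have hk' : k ≤ -2 ∨ 2 ≤ k := by
    rcases le_abs.mp hk with h | h
    · right; exact h
    · left; omega
  set G : ℝ → ℝ := fun θ => g θ - (s * θ + α) + 1 / 2 with hGdef
  have hGc : Continuous G :=
    (hgc.sub ((continuous_const.mul continuous_id).add continuous_const)).add continuous_const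
  have hGne : ∀ (θ : ℝ) (n : ℤ), G θ ≠ n := by
    intro θ n h
    apply hne θ
    have hx : g θ - (s * θ + α) = (n : ℝ) - 1 / 2 := by
      simp only [hGdef] at h; linarith
    rw [hx, e2_int_sub_half]
  have hg1 : g 1 = g 0 + k := by simpa using hgp 0
  rcases hs with rfl | rfl
  · exact ivt_aux G hGc (k - 1) (by omega)
      (by simp only [hGdef]; rw [hg1]; push_cast; ring) hGne
  · exact ivt_aux G hGc (k + 1) (by omega)
      (by simp only [hGdef]; rw [hg1]; push_cast; ring) hGne

lemma bridge (f : ℂ → ℂ) (L : ℂ →L[ℝ] ℂ) (c r : ℝ) (hc : 0 < c) (hr : 0 < r)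
    (hb : ∀ u : ℂ, ‖u‖ < 2 * r → ‖f u - L u‖ ≤ c / 2 * ‖u‖)
    (k : ℤ) (hk : 2 ≤ |k|) (g : ℝ → ℝ) (hgc : Continuous g)
    (hgp : ∀ θ, g (θ + 1) = g θ + k)
    (hgf : ∀ θ : ℝ, f ((r : ℂ) * e2 θ) = (‖f (r : ℂ)‖ : ℂ) * e2 (g θ))
    (s α : ℝ) (hs : s = 1 ∨ s = -1)
    (hform : ∀ θ : ℝ, L ((r : ℂ) * e2 θ) = ((c * r : ℝ) : ℂ) * e2 (s * θ + α)) : False := by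
  apply main_aux k hk g hgc hgp s α hs
  intro θ hcontra
  have hz : ‖(r : ℂ) * e2 θ‖ = r := by
    rw [norm_mul, e2_norm, mul_one, Complex.norm_real, Real.norm_eq_abs, abs_of_pos hr]
  have hEg : e2 (g θ) = -e2 (s * θ + α) := by
    have h : e2 (g θ) = e2 (g θ - (s * θ + α)) * e2 (s * θ + α) := by
      rw [← e2_add]; congr 1; ring
    rw [hcontra, neg_one_mul] at h; exact h
  have hdiff : f ((r : ℂ) * e2 θ) - L ((r : ℂ) * e2 θ)
      = -(((‖f (r : ℂ)‖ + c * r : ℝ)) : ℂ) * e2 (s * θ + α) := by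
    rw [hgf θ, hEg, hform θ]; push_cast; ring
  have hnb := hb ((r : ℂ) * e2 θ) (by rw [hz]; linarith)
  rw [hdiff, hz, norm_mul, norm_neg, e2_norm, mul_one, Complex.norm_real,
    Real.norm_eq_abs, abs_of_nonneg (by positivity)] at hnb
  nlinarith [norm_nonneg (f (r : ℂ)), mul_pos hc hr]

/-- If `f : ℂ → ℂ` is real-differentiable at `0`, fixes `0`, carries circles centered at `0`
into circles centered at `0`, and has degree `k` with `|k| ≥ 2` on each circle of radius
`r > 0`, then the derivative of `f` at `0` vanishes. -/
theorem fderiv_eq_zero_of_degree_ge_two (f : ℂ → ℂ) (hf : DifferentiableAt ℝ f 0)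
    (h0 : f 0 = 0) (hcirc : ∀ z w : ℂ, ‖z‖ = ‖w‖ → ‖f z‖ = ‖f w‖)
    (k : ℤ) (hk : 2 ≤ |k|)
    (hdeg : ∀ r : ℝ, 0 < r → ∃ g : ℝ → ℝ, Continuous g ∧
      (∀ θ : ℝ, g (θ + 1) = g θ + k) ∧
      (∀ θ : ℝ, f ((r : ℂ) * Complex.exp (2 * (π : ℂ) * Complex.I * (θ : ℂ)))
        = (‖f (r : ℂ)‖ : ℂ) * Complex.exp (2 * (π : ℂ) * Complex.I * (g θ : ℂ)))) :
    fderiv ℝ f 0 = 0 := by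
  set L := fderiv ℝ f 0 with hLdef
  have hfd := hf.hasFDerivAt
  rw [hasFDerivAt_iff_isLittleO_nhds_zero] at hfd
  simp only [zero_add, h0, sub_zero] at hfd
  have hlo : ∀ ε : ℝ, 0 < ε → ∃ δ > 0, ∀ u : ℂ, ‖u‖ < δ → ‖f u - L u‖ ≤ ε * ‖u‖ := by
    intro ε hε
    have h := hfd.def hε
    rw [Metric.eventually_nhds_iff] at h
    obtain ⟨δ, hδ, h⟩ := h
    refine ⟨δ, hδ, fun u hu => ?_⟩
    have := h (y := u) (by simpa [dist_eq_norm] using hu)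
    simpa using this
  -- norms of L depend only on norms
  have hL : ∀ z w : ℂ, ‖z‖ = ‖w‖ → ‖L z‖ = ‖L w‖ := by
    intro z w hzw
    have key : ∀ ε : ℝ, 0 < ε → |‖L z‖ - ‖L w‖| ≤ ε * (2 * ‖z‖) := by
      intro ε hε
      obtain ⟨δ, hδ, hb⟩ := hlo ε hε
      set t : ℝ := δ / (2 * (‖z‖ + 1)) with ht
      have htpos : 0 < t := div_pos hδ (by positivity)
      have hteq : t * (2 * (‖z‖ + 1)) = δ := by
        rw [ht, div_mul_cancel₀]; positivity
      have h1 : ‖t • z‖ < δ := by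
        rw [norm_smul, Real.norm_eq_abs, abs_of_pos htpos]
        nlinarith [norm_nonneg z]
      have h2 : ‖t • w‖ < δ := by
        rw [norm_smul, Real.norm_eq_abs, abs_of_pos htpos, ← hzw]
        nlinarith [norm_nonneg z]
      have e1 := hb (t • z) h1
      have e2' := hb (t • w) h2
      have hfeq : ‖f (t • z)‖ = ‖f (t • w)‖ :=
        hcirc _ _ (by rw [norm_smul, norm_smul, hzw])
      have n1 : |‖f (t • z)‖ - t * ‖L z‖| ≤ ε * (t * ‖z‖) := by
        have h := (abs_norm_sub_norm_le (f (t • z)) (L (t • z))).trans e1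
        rwa [L.map_smul, norm_smul, norm_smul, Real.norm_eq_abs, abs_of_pos htpos] at h
      have n2 : |‖f (t • w)‖ - t * ‖L w‖| ≤ ε * (t * ‖w‖) := by
        have h := (abs_norm_sub_norm_le (f (t • w)) (L (t • w))).trans e2'
        rwa [L.map_smul, norm_smul, norm_smul, Real.norm_eq_abs, abs_of_pos htpos] at h
      have n2' : |‖f (t • z)‖ - t * ‖L w‖| ≤ ε * (t * ‖z‖) := by
        rw [hfeq, hzw]; exact n2
      have h5 : t * |‖L z‖ - ‖L w‖| = |t * ‖L z‖ - t * ‖L w‖| := by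
        rw [← mul_sub, abs_mul, abs_of_pos htpos]
      have h6 := abs_sub_le (t * ‖L z‖) (‖f (t • z)‖) (t * ‖L w‖)
      have h7 : |t * ‖L z‖ - ‖f (t • z)‖| = |‖f (t • z)‖ - t * ‖L z‖| := abs_sub_comm _ _
      have h8 : t * |‖L z‖ - ‖L w‖| ≤ t * (ε * (2 * ‖z‖)) := by
        rw [h5]; nlinarith
      exact le_of_mul_le_mul_left (by linarith) htpos
    by_contra hne
    have hpos : 0 < |‖L z‖ - ‖L w‖| := abs_pos.mpr (sub_ne_zero.mpr hne)
    set d := |‖L z‖ - ‖L w‖|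
    have hε : 0 < d / (2 * (2 * ‖z‖ + 1)) := by positivity
    have h9 := key _ hε
    have hden : (0:ℝ) < 2 * (2 * ‖z‖ + 1) := by positivity
    rw [div_mul_eq_mul_div, le_div_iff₀ hden] at h9
    nlinarith [norm_nonneg z]
  set c := ‖L 1‖ with hcdef
  have hnorm : ∀ z : ℂ, ‖L z‖ = c * ‖z‖ := by
    intro z
    have h1 : ‖z‖ = ‖((‖z‖ : ℝ) : ℂ)‖ := by
      rw [Complex.norm_real, Real.norm_eq_abs, abs_of_nonneg (norm_nonneg z)]
    rw [hL z _ h1]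
    have h2 : ((‖z‖ : ℝ) : ℂ) = (‖z‖ : ℝ) • (1 : ℂ) := by
      simp [Complex.real_smul]
    rw [h2, L.map_smul, norm_smul, Real.norm_eq_abs, abs_of_nonneg (norm_nonneg z)]
    ring
  rcases (norm_nonneg (L 1)).eq_or_lt with hc | hc
  · ext z
    have hz := hnorm z
    have hc0 : c = 0 := by rw [hcdef, ← hc]
    rw [hc0, zero_mul] at hz
    simpa using norm_eq_zero.mp hz
  · exfalso
    rw [← hcdef] at hc
    -- build a linear isometry equiv
    have hJnorm : ∀ z : ℂ, ‖(c⁻¹ • L) z‖ = ‖z‖ := by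
      intro z
      rw [ContinuousLinearMap.smul_apply, norm_smul, Real.norm_eq_abs,
        abs_of_pos (inv_pos.mpr hc), hnorm]
      field_simp
    have hJinj : Function.Injective (c⁻¹ • L : ℂ →L[ℝ] ℂ) := by
      intro x y hxy
      have h : ‖(c⁻¹ • L) (x - y)‖ = 0 := by
        rw [map_sub, hxy, sub_self, norm_zero]
      rw [hJnorm] at h
      exact sub_eq_zero.mp (norm_eq_zero.mp h)
    have hsurj : Function.Surjective ((c⁻¹ • L : ℂ →L[ℝ] ℂ) : ℂ →ₗ[ℝ] ℂ) :=
      LinearMap.injective_iff_surjective.mp hJinj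
    let eqv : ℂ ≃ₗ[ℝ] ℂ :=
      LinearEquiv.ofBijective ((c⁻¹ • L : ℂ →L[ℝ] ℂ) : ℂ →ₗ[ℝ] ℂ) ⟨hJinj, hsurj⟩
    let iso : ℂ ≃ₗᵢ[ℝ] ℂ := ⟨eqv, hJnorm⟩
    have hisoz : ∀ z : ℂ, iso z = c⁻¹ • L z := fun z => rfl
    obtain ⟨a, ha⟩ := linear_isometry_complex iso
    set α := (a : ℂ).arg / (2 * π) with hαdef
    have ha2 : (a : ℂ) = e2 α := by
      have habs : ‖(a : ℂ)‖ = 1 := Circle.norm_coe a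
      have h2 := Complex.norm_mul_exp_arg_mul_I (a : ℂ)
      rw [habs, Complex.ofReal_one, one_mul] at h2
      rw [e2, ← h2]
      congr 1
      have hπ : (π : ℂ) ≠ 0 := by exact_mod_cast Real.pi_ne_zero
      rw [hαdef]
      push_cast
      field_simp
    obtain ⟨δ, hδ, hb⟩ := hlo (c / 2) (by positivity)
    set r := δ / 2 with hrdef
    have hr : 0 < r := by positivity
    have h2r : 2 * r = δ := by rw [hrdef]; ring
    obtain ⟨g, hgc, hgp, hgf⟩ := hdeg r hr
    have hgf' : ∀ θ : ℝ, f ((r : ℂ) * e2 θ) = (‖f (r : ℂ)‖ : ℂ) * e2 (g θ) := hgf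
    have hb' : ∀ u : ℂ, ‖u‖ < 2 * r → ‖f u - L u‖ ≤ c / 2 * ‖u‖ := by
      intro u hu; exact hb u (h2r ▸ hu)
    rcases ha with ha | ha
    · -- rotation : L z = c * (a * z)
      have hLz : ∀ z : ℂ, L z = (c : ℂ) * ((a : ℂ) * z) := by
        intro z
        have h1 : iso z = (a : ℂ) * z := by rw [ha, rotation_apply]
        rw [hisoz] at h1
        have h2 : (c : ℝ) • (c⁻¹ • L z) = (c : ℝ) • ((a : ℂ) * z) := by rw [h1]
        rw [smul_smul, mul_inv_cancel₀ (ne_of_gt hc), one_smul] at h2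
        rw [h2, Complex.real_smul]
      refine bridge f L c r hc hr hb' k hk g hgc hgp hgf' 1 α (Or.inl rfl) ?_
      intro θ
      rw [hLz, ha2, show (1 : ℝ) * θ + α = θ + α by ring, e2_add]
      push_cast; ring
    · -- conj then rotation : L z = c * (a * conj z)
      have hLz : ∀ z : ℂ, L z = (c : ℂ) * ((a : ℂ) * (starRingEnd ℂ) z) := by
        intro z
        have h1 : iso z = (a : ℂ) * (starRingEnd ℂ) z := by
          rw [ha]; rfl
        rw [hisoz] at h1
        have h2 : (c : ℝ) • (c⁻¹ • L z) = (c : ℝ) • ((a : ℂ) * (starRingEnd ℂ) z) := by rw [h1]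
        rw [smul_smul, mul_inv_cancel₀ (ne_of_gt hc), one_smul] at h2
        rw [h2, Complex.real_smul]
      have hconj : ∀ θ : ℝ, (starRingEnd ℂ) ((r : ℂ) * e2 θ) = (r : ℂ) * e2 (-θ) := by
        intro θ
        rw [map_mul, Complex.conj_ofReal, e2, e2, ← Complex.exp_conj]
        congr 1
        simp only [map_mul, map_ofNat, Complex.conj_I, Complex.conj_ofReal]
        push_cast; ring
      refine bridge f L c r hc hr hb' k hk g hgc hgp hgf' (-1) α (Or.inr rfl) ?_
      intro θ
      rw [hLz, hconj, ha2, show (-1 : ℝ) * θ + α = -θ + α by ring, e2_add]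
      push_cast; ring
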